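/- arXiv:2503.12176 — 2 statements merged into one kernel-verified Lean document; each statement's English description precedes it below -/
import Mathlib

section
/- (Theorem 3.5(ii)) Let the sequences (xᵏ, yᵏ, uᵏ, θ_k) be generated by the FPSA iteration, let m, M > 0 satisfy m ≤ f(Kxᵏ) ≤ M for all k, and define ϖ(x,y,u) = φ(x,u)/(⟨Kx, y⟩ − f*(y)). Then lim_{k→∞} ϖ(xᵏ⁺¹, yᵏ⁺¹, uᵏ⁺¹) exists and equals θ̄ = lim_{k→∞} θ_k. -/
open Filter Metric Set RealInnerProductSpace
open scoped Topology Classical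

noncomputable section

/-- Convexity for extended-real-valued functions. -/
def ERealConvex {α : Type*} [AddCommGroup α] [Module ℝ α] (f : α → EReal) : Prop :=
  ∀ x y : α, ∀ a b : ℝ, 0 ≤ a → 0 ≤ b → a + b = 1 →
    f (a • x + b • y) ≤ (a : EReal) * f x + (b : EReal) * f y

/-- A proper extended-real-valued function: never `⊥` and finite somewhere. -/
def ERealProper {α : Type*} (f : α → EReal) : Prop :=
  (∀ x, f x ≠ ⊥) ∧ ∃ x, f x ≠ ⊤

/-- Effective domain of an extended-real-valued function. -/
def edom {α : Type*} (f : α → EReal) : Set α := {x | f x ≠ ⊤}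

/-- Convex (Fenchel) conjugate. -/
def econj {α : Type*} [NormedAddCommGroup α] [InnerProductSpace ℝ α]
    (f : α → EReal) (y : α) : EReal :=
  ⨆ z, (((⟪z, y⟫ : ℝ) : EReal) - f z)

/-- Convex subdifferential. -/
def csubdiff {α : Type*} [NormedAddCommGroup α] [InnerProductSpace ℝ α]
    (f : α → EReal) (z : α) : Set α :=
  {v | ∀ w, f z + ((⟪v, w - z⟫ : ℝ) : EReal) ≤ f w}

/-- Normal cone of a convex set. -/
def normalCone {α : Type*} [NormedAddCommGroup α] [InnerProductSpace ℝ α]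
    (S : Set α) (x : α) : Set α :=
  {v | ∀ z ∈ S, ⟪v, z - x⟫ ≤ 0}

/-- Calmness of an extended-real-valued function at a point of its domain. -/
def ECalm {α : Type*} [NormedAddCommGroup α] (f : α → EReal) (y : α) : Prop :=
  f y ≠ ⊤ ∧ ∃ ϱ > (0:ℝ), ∃ ε > (0:ℝ), ∀ y' ∈ Metric.ball y ε,
    f y - ((ϱ * ‖y' - y‖ : ℝ) : EReal) ≤ f y' ∧ f y' ≤ f y + ((ϱ * ‖y' - y‖ : ℝ) : EReal)

/-- Fréchet subdifferential of an extended-real-valued function of one variable. -/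
def fsub {α : Type*} [NormedAddCommGroup α] [InnerProductSpace ℝ α]
    (f : α → EReal) (x : α) : Set α :=
  {v | 0 ≤ Filter.liminf
      (fun z => (f z - f x - ((⟪v, z - x⟫ : ℝ) : EReal)) * (((‖z - x‖)⁻¹ : ℝ) : EReal))
      (𝓝[≠] x)}

/-- Fréchet subdifferential of a function of two (inner-product-space) variables. -/
def fsub2 {α β : Type*} [NormedAddCommGroup α] [InnerProductSpace ℝ α]
    [NormedAddCommGroup β] [InnerProductSpace ℝ β]
    (Φ : α → β → EReal) (a : α) (b : β) : Set (α × β) :=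
  {v | 0 ≤ Filter.liminf
      (fun w : α × β =>
        (Φ w.1 w.2 - Φ a b - ((⟪v.1, w.1 - a⟫ + ⟪v.2, w.2 - b⟫ : ℝ) : EReal)) *
          (((‖w - (a, b)‖)⁻¹ : ℝ) : EReal))
      (𝓝[≠] (a, b))}

/-- Limiting (Mordukhovich) subdifferential of a function of two variables. -/
def lsub2 {α β : Type*} [NormedAddCommGroup α] [InnerProductSpace ℝ α]
    [NormedAddCommGroup β] [InnerProductSpace ℝ β]
    (Φ : α → β → EReal) (a : α) (b : β) : Set (α × β) :=
  {v | ∃ w : ℕ → α × β, ∃ vs : ℕ → α × β,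
      Tendsto w atTop (𝓝 (a, b)) ∧
      Tendsto (fun k => Φ (w k).1 (w k).2) atTop (𝓝 (Φ a b)) ∧
      (∀ k, vs k ∈ fsub2 Φ (w k).1 (w k).2) ∧
      Tendsto vs atTop (𝓝 v)}

/-- Fréchet subdifferential of a function of three variables. -/
def fsub3 {α β γ : Type*} [NormedAddCommGroup α] [InnerProductSpace ℝ α]
    [NormedAddCommGroup β] [InnerProductSpace ℝ β]
    [NormedAddCommGroup γ] [InnerProductSpace ℝ γ]
    (Φ : α → β → γ → EReal) (a : α) (b : β) (c : γ) : Set (α × β × γ) :=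
  {v | 0 ≤ Filter.liminf
      (fun w : α × β × γ =>
        (Φ w.1 w.2.1 w.2.2 - Φ a b c -
          ((⟪v.1, w.1 - a⟫ + ⟪v.2.1, w.2.1 - b⟫ + ⟪v.2.2, w.2.2 - c⟫ : ℝ) : EReal)) *
          (((‖w - (a, b, c)‖)⁻¹ : ℝ) : EReal))
      (𝓝[≠] (a, b, c))}

/-- Limiting (Mordukhovich) subdifferential of a function of three variables. -/
def lsub3 {α β γ : Type*} [NormedAddCommGroup α] [InnerProductSpace ℝ α]
    [NormedAddCommGroup β] [InnerProductSpace ℝ β]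
    [NormedAddCommGroup γ] [InnerProductSpace ℝ γ]
    (Φ : α → β → γ → EReal) (a : α) (b : β) (c : γ) : Set (α × β × γ) :=
  {v | ∃ w : ℕ → α × β × γ, ∃ vs : ℕ → α × β × γ,
      Tendsto w atTop (𝓝 (a, b, c)) ∧
      Tendsto (fun k => Φ (w k).1 (w k).2.1 (w k).2.2) atTop (𝓝 (Φ a b c)) ∧
      (∀ k, vs k ∈ fsub3 Φ (w k).1 (w k).2.1 (w k).2.2) ∧
      Tendsto vs atTop (𝓝 v)}

/-- A polyhedral set: a finite intersection of closed half-spaces. -/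
def IsPolyhedral {α : Type*} [NormedAddCommGroup α] [InnerProductSpace ℝ α]
    (S : Set α) : Prop :=
  ∃ (m : ℕ) (a : Fin m → α) (b : Fin m → ℝ), S = {z | ∀ i, ⟪a i, z⟫ ≤ b i}

/-- The merit function φ(x,u) = g(x) + h(x) + ι_S(x) + (1/(2δ))‖x-u‖². -/
def phiF {n : ℕ} (S : Set (EuclideanSpace ℝ (Fin n)))
    (g : EuclideanSpace ℝ (Fin n) → EReal) (h : EuclideanSpace ℝ (Fin n) → ℝ) (δ : ℝ)
    (x u : EuclideanSpace ℝ (Fin n)) : EReal :=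
  g x + ((h x : ℝ) : EReal) + (if x ∈ S then (0 : EReal) else ⊤)
    + (((2 * δ)⁻¹ * ‖x - u‖ ^ 2 : ℝ) : EReal)

/-- ϑ(x,u) = φ(x,u)/f(Kx). -/
def varthetaF {n p : ℕ} (S : Set (EuclideanSpace ℝ (Fin n)))
    (g : EuclideanSpace ℝ (Fin n) → EReal) (h : EuclideanSpace ℝ (Fin n) → ℝ)
    (f : EuclideanSpace ℝ (Fin p) → EReal)
    (K : EuclideanSpace ℝ (Fin n) →ₗ[ℝ] EuclideanSpace ℝ (Fin p)) (δ : ℝ)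
    (x u : EuclideanSpace ℝ (Fin n)) : EReal :=
  phiF S g h δ x u / f (K x)

/-- ϖ(x,y,u) = φ(x,u)/(⟨Kx,y⟩ - f*(y)). -/
def varpiF {n p : ℕ} (S : Set (EuclideanSpace ℝ (Fin n)))
    (g : EuclideanSpace ℝ (Fin n) → EReal) (h : EuclideanSpace ℝ (Fin n) → ℝ)
    (f : EuclideanSpace ℝ (Fin p) → EReal)
    (K : EuclideanSpace ℝ (Fin n) →ₗ[ℝ] EuclideanSpace ℝ (Fin p)) (δ : ℝ)
    (x : EuclideanSpace ℝ (Fin n)) (y : EuclideanSpace ℝ (Fin p))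
    (u : EuclideanSpace ℝ (Fin n)) : EReal :=
  phiF S g h δ x u / (((⟪K x, y⟫ : ℝ) : EReal) - econj f y)

section AuxLemmas

open intervalIntegral in
lemma aux_t (E C : ℝ) (hC : 0 ≤ C) (H : ∀ t : ℝ, 0 < t → t ≤ 1 → 0 ≤ t * E + t^2 * C) :
    0 ≤ E := by
  by_contra hE
  push_neg at hE
  rcases eq_or_lt_of_le hC with hC0 | hC0
  · have := H 1 one_pos le_rfl; nlinarith
  · set t := min 1 ((-E)/(2*C)) with ht
    have ht0 : 0 < t := lt_min one_pos (div_pos (by linarith) (by linarith))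
    have ht1 : t ≤ 1 := min_le_left _ _
    have ht2 : t ≤ (-E)/(2*C) := min_le_right _ _
    have h1 := H t ht0 ht1
    have h3 : t^2 * C ≤ t * (-E) / 2 := by
      have h4 : t * t * C ≤ t * ((-E)/(2*C)) * C :=
        mul_le_mul_of_nonneg_right (mul_le_mul_of_nonneg_left ht2 ht0.le) hC
      calc t^2*C = t*t*C := by ring
        _ ≤ t*((-E)/(2*C))*C := h4
        _ = t*(-E)/2 := by field_simp
    have h5 : t * E < 0 := mul_neg_of_pos_of_neg ht0 hE
    linarith

open intervalIntegral in
lemma descent_lemma {n : ℕ} (h : EuclideanSpace ℝ (Fin n) → ℝ)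
    (gh : EuclideanSpace ℝ (Fin n) → EuclideanSpace ℝ (Fin n))
    (O : Set (EuclideanSpace ℝ (Fin n)))
    (hgrad : ∀ z ∈ O, HasGradientAt h (gh z) z)
    (L : ℝ) (hL : 0 < L)
    (hLip : ∀ z ∈ O, ∀ w ∈ O, ‖gh z - gh w‖ ≤ L * ‖z - w‖)
    (a b : EuclideanSpace ℝ (Fin n)) (hseg : segment ℝ a b ⊆ O) :
    h b ≤ h a + ⟪gh a, b - a⟫ + L / 2 * ‖b - a‖ ^ 2 := by
  set d := b - a with hd
  set γ : ℝ → EuclideanSpace ℝ (Fin n) := fun t => a + t • d with hγ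
  have hγmem : ∀ t ∈ Icc (0:ℝ) 1, γ t ∈ segment ℝ a b := by
    intro t ht
    exact ⟨1 - t, t, by linarith [ht.2], ht.1, by ring, by
      simp only [hγ, hd, smul_sub, sub_smul, one_smul]; abel⟩
  have hγO : ∀ t ∈ Icc (0:ℝ) 1, γ t ∈ O := fun t ht => hseg (hγmem t ht)
  have hderiv : ∀ t ∈ Icc (0:ℝ) 1, HasDerivAt (fun s => h (γ s)) ⟪gh (γ t), d⟫ t := by
    intro t ht
    have h1 : HasFDerivAt h (InnerProductSpace.toDual ℝ _ (gh (γ t))) (γ t) :=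
      (hgrad _ (hγO t ht)).hasFDerivAt
    have h2 : HasDerivAt γ d t := by
      simpa [hγ] using ((hasDerivAt_id t).smul_const d).const_add a
    simpa [InnerProductSpace.toDual_apply_apply, Function.comp_def] using h1.comp_hasDerivAt t h2
  have ghcont : ContinuousOn gh O := by
    have : LipschitzOnWith (Real.toNNReal L) gh O := by
      apply LipschitzOnWith.of_dist_le_mul
      intro x hx y hy
      rw [dist_eq_norm, dist_eq_norm, Real.coe_toNNReal L hL.le]
      exact hLip x hx y hy
    exact this.continuousOn
  have hcont : ContinuousOn (fun t => ⟪gh (γ t), d⟫) (Icc (0:ℝ) 1) := by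
    have hγc : Continuous γ := continuous_const.add (continuous_id.smul continuous_const)
    exact (ghcont.comp hγc.continuousOn hγO).inner continuousOn_const
  have key : h (γ 1) - h (γ 0) = ∫ t in (0:ℝ)..1, ⟪gh (γ t), d⟫ := by
    refine (integral_eq_sub_of_hasDerivAt (fun t ht => hderiv t ?_) ?_).symm
    · rwa [uIcc_of_le zero_le_one] at ht
    · exact (hcont.mono (by rw [uIcc_of_le zero_le_one])).intervalIntegrable
  have haO : a ∈ O := hseg (left_mem_segment ℝ a b)
  have bound : ∀ t ∈ Icc (0:ℝ) 1, ⟪gh (γ t), d⟫ ≤ ⟪gh a, d⟫ + L * ‖d‖^2 * t := by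
    intro t ht
    have h1 : ⟪gh (γ t), d⟫ - ⟪gh a, d⟫ = ⟪gh (γ t) - gh a, d⟫ := by
      rw [inner_sub_left]
    have h2 : ⟪gh (γ t) - gh a, d⟫ ≤ ‖gh (γ t) - gh a‖ * ‖d‖ :=
      real_inner_le_norm _ _
    have h3 : ‖gh (γ t) - gh a‖ ≤ L * (t * ‖d‖) := by
      have := hLip (γ t) (hγO t ht) a haO
      have h4 : γ t - a = t • d := by simp [hγ]
      rwa [h4, norm_smul, Real.norm_eq_abs, abs_of_nonneg ht.1] at this
    have h5 : ‖gh (γ t) - gh a‖ * ‖d‖ ≤ L * (t * ‖d‖) * ‖d‖ :=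
      mul_le_mul_of_nonneg_right h3 (norm_nonneg _)
    nlinarith [norm_nonneg d]
  have int1 : IntervalIntegrable (fun t => ⟪gh (γ t), d⟫) MeasureTheory.volume 0 1 :=
    (hcont.mono (by rw [uIcc_of_le zero_le_one])).intervalIntegrable
  have cont2 : Continuous (fun t : ℝ => ⟪gh a, d⟫ + L * ‖d‖^2 * t) :=
    continuous_const.add (continuous_const.mul continuous_id)
  have int2 : IntervalIntegrable (fun t => ⟪gh a, d⟫ + L * ‖d‖^2 * t) MeasureTheory.volume 0 1 :=
    cont2.intervalIntegrable 0 1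
  have mono := integral_mono_on zero_le_one int1 int2 bound
  have calc2 : (∫ t in (0:ℝ)..1, (⟪gh a, d⟫ + L * ‖d‖^2 * t)) = ⟪gh a, d⟫ + L / 2 * ‖d‖^2 := by
    rw [integral_add (f := fun _ => ⟪gh a, d⟫) (g := fun t => L * ‖d‖^2 * t)
      intervalIntegrable_const
      ((continuous_const.mul continuous_id').intervalIntegrable 0 1),
      integral_const, integral_const_mul, integral_id]
    simp; ring
  have hγ1 : γ 1 = b := by simp [hγ, hd]
  have hγ0 : γ 0 = a := by simp [hγ]
  rw [hγ1, hγ0] at key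
  rw [calc2] at mono
  linarith [key ▸ mono]

lemma subgrad_bounded {p : ℕ} (f : EuclideanSpace ℝ (Fin p) → EReal)
    (hfP : ERealProper f) (hfconv : ERealConvex f)
    (C : Set (EuclideanSpace ℝ (Fin p))) (hC : IsCompact C)
    (hCint : C ⊆ interior (edom f)) :
    ∃ R : ℝ, ∀ z ∈ C, ∀ y ∈ csubdiff f z, ‖y‖ ≤ R := by
  classical
  have hedom : ∀ {z}, z ∈ edom f → f z = (((f z).toReal : ℝ) : EReal) :=
    fun {z} hz => (EReal.coe_toReal hz (hfP.1 z)).symm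
  have hconvdom : Convex ℝ (edom f) := by
    intro x hx y hy a b ha hb hab
    have h1 := hfconv x y a b ha hb hab
    have h2 : (a : EReal) * f x + (b : EReal) * f y
        = (((a * (f x).toReal + b * (f y).toReal : ℝ)) : EReal) := by
      rw [hedom hx, hedom hy, ← EReal.coe_mul, ← EReal.coe_mul, ← EReal.coe_add]
      simp
    rw [h2] at h1
    exact ne_top_of_le_ne_top (EReal.coe_ne_top _) h1
  set fr : EuclideanSpace ℝ (Fin p) → ℝ := fun z => (f z).toReal with hfr
  have hconvOn : ConvexOn ℝ (interior (edom f)) fr := by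
    refine ⟨hconvdom.interior, ?_⟩
    intro x hx y hy a b ha hb hab
    have hxd : x ∈ edom f := interior_subset hx
    have hyd : y ∈ edom f := interior_subset hy
    have h1 := hfconv x y a b ha hb hab
    have h2 : (a : EReal) * f x + (b : EReal) * f y
        = (((a * fr x + b * fr y : ℝ)) : EReal) := by
      rw [hedom hxd, hedom hyd, ← EReal.coe_mul, ← EReal.coe_mul, ← EReal.coe_add]
    rw [h2] at h1
    have h3 := EReal.toReal_le_toReal h1 (hfP.1 _) (EReal.coe_ne_top _)
    rwa [EReal.toReal_coe] at h3
  have hcont : ContinuousOn fr (interior (edom f)) := by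
    have := hconvOn.continuousOn_interior
    rwa [interior_interior] at this
  obtain ⟨ε, hε, hsub⟩ := hC.exists_cthickening_subset_open isOpen_interior hCint
  have hTc : IsCompact (cthickening ε C) := hC.cthickening
  obtain ⟨B, hB⟩ := hTc.exists_bound_of_continuousOn (hcont.mono hsub)
  refine ⟨2 * B / ε, ?_⟩
  intro z hz y hy
  have hzT : z ∈ cthickening ε C := self_subset_cthickening _ hz
  have hzB : |fr z| ≤ B := by simpa using hB z hzT
  rcases eq_or_ne y 0 with rfl | hy0
  · have hB0 : 0 ≤ B := le_trans (abs_nonneg _) hzB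
    simp only [norm_zero]
    positivity
  · set w := z + ε • (‖y‖⁻¹ • y) with hw
    have hwT : w ∈ cthickening ε C := by
      apply mem_cthickening_of_dist_le w z ε C hz
      have : dist w z = ε := by
        rw [dist_eq_norm, hw]
        simp [norm_smul, abs_of_nonneg hε.le,
          inv_mul_cancel₀ (norm_ne_zero_iff.2 hy0)]
      linarith [this.le]
    have hwB : |fr w| ≤ B := by simpa using hB w hwT
    have hinner : ⟪y, w - z⟫ = ε * ‖y‖ := by
      rw [hw]
      have heq1 : z + ε • (‖y‖⁻¹ • y) - z = (ε * ‖y‖⁻¹) • y := by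
        rw [smul_smul]; abel
      have hn : ‖y‖ ≠ 0 := norm_ne_zero_iff.2 hy0
      rw [heq1, real_inner_smul_right, real_inner_self_eq_norm_sq, sq]
      field_simp
    have hsd := hy w
    rw [hinner] at hsd
    have hzd : z ∈ edom f := interior_subset (hCint hz)
    have hwd : w ∈ edom f := interior_subset (hsub hwT)
    rw [hedom hzd, hedom hwd, ← EReal.coe_add] at hsd
    have hsd' : fr z + ε * ‖y‖ ≤ fr w := by exact_mod_cast hsd
    have h6 : ε * ‖y‖ ≤ 2 * B := by
      have h7 := abs_le.1 hzB
      have h8 := abs_le.1 hwB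
      linarith [h7.1, h8.2]
    exact (le_div_iff₀ hε).2 (by linarith [mul_comm ‖y‖ ε])

lemma prox_step {n : ℕ} {S : Set (EuclideanSpace ℝ (Fin n))} (hSconv : Convex ℝ S)
    (g : EuclideanSpace ℝ (Fin n) → EReal) (hgbot : ∀ z, g z ≠ ⊥) (hgconv : ERealConvex g)
    (δ : ℝ) (hδ : 0 < δ)
    (xp w v : EuclideanSpace ℝ (Fin n)) (hxpS : xp ∈ S) (hwS : w ∈ S)
    (hgxp : g xp ≠ ⊤) (hgw : g w ≠ ⊤)
    (hmin : ∀ z ∈ S, g xp + (((2*δ)⁻¹ * ‖xp - v‖^2 : ℝ) : EReal)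
      ≤ g z + (((2*δ)⁻¹ * ‖z - v‖^2 : ℝ) : EReal)) :
    (g xp).toReal + (2*δ)⁻¹ * ‖xp - v‖^2
      ≤ (g w).toReal + (2*δ)⁻¹ * ‖w - v‖^2 - (2*δ)⁻¹ * ‖w - xp‖^2 := by
  set Gp := (g xp).toReal with hGp
  set Gw := (g w).toReal with hGw
  have hgxp' : g xp = ((Gp : ℝ) : EReal) := (EReal.coe_toReal hgxp (hgbot xp)).symm
  have hgw' : g w = ((Gw : ℝ) : EReal) := (EReal.coe_toReal hgw (hgbot w)).symm
  set d := w - xp with hd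
  have h2δ : (0:ℝ) < 2*δ := by linarith
  have hE : 0 ≤ (Gw - Gp) + δ⁻¹ * ⟪xp - v, d⟫ := by
    apply aux_t _ ((2*δ)⁻¹ * ‖d‖^2) (by positivity)
    intro t ht0 ht1
    have hmemeq : xp + t • d = (1 - t) • xp + t • w := by
      rw [hd, smul_sub, sub_smul, one_smul]; abel
    have hmem : xp + t • d ∈ S := by
      rw [hmemeq]; exact hSconv hxpS hwS (by linarith) ht0.le (by ring)
    have hgc : g (xp + t • d) ≤ (((1 - t) * Gp + t * Gw : ℝ) : EReal) := by
      rw [hmemeq]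
      have := hgconv xp w (1 - t) t (by linarith) ht0.le (by ring)
      rwa [hgxp', hgw', ← EReal.coe_mul, ← EReal.coe_mul, ← EReal.coe_add] at this
    have hmin' := hmin (xp + t • d) hmem
    have hchain : ((Gp : ℝ) : EReal) + (((2*δ)⁻¹ * ‖xp - v‖^2 : ℝ) : EReal)
        ≤ (((1 - t) * Gp + t * Gw + (2*δ)⁻¹ * ‖xp + t • d - v‖^2 : ℝ) : EReal) := by
      rw [hgxp'] at hmin'
      refine le_trans hmin' ?_
      rw [EReal.coe_add]
      exact add_le_add_left hgc _
    have hreal : Gp + (2*δ)⁻¹ * ‖xp - v‖^2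
        ≤ (1 - t) * Gp + t * Gw + (2*δ)⁻¹ * ‖xp + t • d - v‖^2 := by
      exact_mod_cast hchain
    have hexp : ‖xp + t • d - v‖^2
        = ‖xp - v‖^2 + 2 * (t * ⟪xp - v, d⟫) + t^2 * ‖d‖^2 := by
      have h1 : xp + t • d - v = (xp - v) + t • d := by abel
      rw [h1, norm_add_sq_real, real_inner_smul_right, norm_smul, Real.norm_eq_abs,
        mul_pow, sq_abs]
    rw [hexp] at hreal
    have hinv2 : (2*δ)⁻¹ * (2 * (t * ⟪xp - v, d⟫)) = δ⁻¹ * (t * ⟪xp - v, d⟫) := by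
      field_simp
    linarith [hreal, hinv2]
  have hexp2 : ‖w - v‖^2 = ‖xp - v‖^2 + 2 * ⟪xp - v, d⟫ + ‖d‖^2 := by
    have h1 : w - v = (xp - v) + d := by rw [hd]; abel
    rw [h1, norm_add_sq_real]
  have hI : Gp - Gw ≤ δ⁻¹ * ⟪xp - v, d⟫ := by linarith
  have h3 : δ⁻¹ * ⟪xp - v, d⟫ = (2*δ)⁻¹ * (2 * ⟪xp - v, d⟫) := by
    field_simp
  have hdw : ‖w - xp‖ = ‖d‖ := by rw [hd]
  rw [hdw, hexp2]
  linarith [hI, h3]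

end AuxLemmas


set_option maxHeartbeats 2000000 in
theorem stmt12 {n p : ℕ}
    (S : Set (EuclideanSpace ℝ (Fin n)))
    (g : EuclideanSpace ℝ (Fin n) → EReal)
    (h : EuclideanSpace ℝ (Fin n) → ℝ)
    (gh : EuclideanSpace ℝ (Fin n) → EuclideanSpace ℝ (Fin n))
    (f : EuclideanSpace ℝ (Fin p) → EReal)
    (K : EuclideanSpace ℝ (Fin n) →ₗ[ℝ] EuclideanSpace ℝ (Fin p))
    (L δ : ℝ)
    (hS : S.Nonempty) (hSconv : Convex ℝ S) (hScomp : IsCompact S)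
    (hgP : ERealProper g) (hgconv : ERealConvex g) (hglsc : LowerSemicontinuous g)
    (hfP : ERealProper f) (hfconv : ERealConvex f) (hflsc : LowerSemicontinuous f)
    (hL : 0 < L)
    (hhC1 : ∃ O : Set (EuclideanSpace ℝ (Fin n)), IsOpen O ∧ S ⊆ O ∧
      (∀ z ∈ O, HasGradientAt h (gh z) z) ∧
      (∀ z ∈ O, ∀ w ∈ O, ‖gh z - gh w‖ ≤ L * ‖z - w‖))
    (hKS : ∀ z ∈ S, K z ∈ interior (edom f))
    (hfpos : ∀ z ∈ S, (0 : EReal) < f (K z))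
    (hghnn : ∀ z ∈ S, (0 : EReal) ≤ g z + ((h z : ℝ) : EReal))
    (hSg : ∃ z ∈ S, g z ≠ ⊤)
    (hδ : 0 < δ) (hδL : δ < 1 / L)
    (σ : ℝ) (hσ : 0 < σ) (hσ2 : σ < 2)
    (x u : ℕ → EuclideanSpace ℝ (Fin n)) (y : ℕ → EuclideanSpace ℝ (Fin p)) (θ : ℕ → ℝ)
    (hxS : ∀ k, x k ∈ S ∧ g (x k) ≠ ⊤)
    (hy : ∀ k, y (k+1) ∈ csubdiff f (K (x k)))
    (hxmin : ∀ k, ∀ w ∈ S,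
      g (x (k+1)) + (((2*δ)⁻¹ * ‖x (k+1) - u k + δ • gh (x k)
          - (θ k * δ) • (LinearMap.adjoint K) (y (k+1))‖ ^ 2 : ℝ) : EReal)
        ≤ g w + (((2*δ)⁻¹ * ‖w - u k + δ • gh (x k)
          - (θ k * δ) • (LinearMap.adjoint K) (y (k+1))‖ ^ 2 : ℝ) : EReal))
    (hu : ∀ k, u (k+1) = (1 - σ) • u k + σ • x (k+1))
    (hθ : ∀ k, (θ k : EReal) = varthetaF S g h f K δ (x k) (u k))
    (hθnn : ∀ k, 0 ≤ θ k)
    (m M : ℝ) (hm : 0 < m)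
    (hmM : ∀ k, (m : EReal) ≤ f (K (x k)) ∧ f (K (x k)) ≤ (M : EReal))
    (θbar : ℝ) (hθlim : Tendsto θ atTop (𝓝 θbar))
    :
    Tendsto (fun k => varpiF S g h f K δ (x (k+1)) (y (k+1)) (u (k+1))) atTop
      (𝓝 ((θbar : ℝ) : EReal)) := by
  classical
  obtain ⟨O, hOopen, hSO, hgradO, hLipO⟩ := hhC1
  have hfne : ∀ k, f (K (x k)) ≠ ⊤ := fun k =>
    ne_top_of_le_ne_top (EReal.coe_ne_top M) (hmM k).2
  set F : ℕ → ℝ := fun k => (f (K (x k))).toReal with hFdef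
  have hfco : ∀ k, f (K (x k)) = ((F k : ℝ) : EReal) :=
    fun k => (EReal.coe_toReal (hfne k) (hfP.1 _)).symm
  have hFm : ∀ k, m ≤ F k := by
    intro k; have h1 := (hmM k).1; rw [hfco k] at h1; exact_mod_cast h1
  have hFM : ∀ k, F k ≤ M := by
    intro k; have h1 := (hmM k).2; rw [hfco k] at h1; exact_mod_cast h1
  have hF0 : ∀ k, (0:ℝ) < F k := fun k => lt_of_lt_of_le hm (hFm k)
  set G : ℕ → ℝ := fun k => (g (x k)).toReal with hGdef
  have hgco : ∀ k, g (x k) = ((G k : ℝ) : EReal) :=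
    fun k => (EReal.coe_toReal (hxS k).2 (hgP.1 _)).symm
  set φr : ℕ → ℝ := fun k => G k + h (x k) + (2*δ)⁻¹ * ‖x k - u k‖^2 with hφrdef
  have hphi : ∀ k, phiF S g h δ (x k) (u k) = ((φr k : ℝ) : EReal) := by
    intro k
    unfold phiF
    rw [hgco k, if_pos (hxS k).1, add_zero]
    norm_cast
  have hθF : ∀ k, θ k * F k = φr k := by
    intro k
    have h1 := hθ k
    unfold varthetaF at h1
    rw [hphi k, hfco k, ← EReal.coe_div] at h1
    have h2 : θ k = φr k / F k := by exact_mod_cast h1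
    rw [h2]
    exact div_mul_cancel₀ _ (ne_of_gt (hF0 k))
  set cδ : ℝ := (2*δ)⁻¹ - L/2 with hcδdef
  have hcδ : 0 < cδ := by
    have h1 : δ * L < 1 := by
      have := (lt_div_iff₀ hL).1 hδL
      linarith
    have h2 : L/2 < (2*δ)⁻¹ := by
      rw [inv_eq_one_div, lt_div_iff₀ (by linarith : (0:ℝ) < 2*δ)]
      nlinarith
    rw [hcδdef]; linarith
  -- subgradient inequality in real form
  have hyF : ∀ k j, F k + ⟪y (k+1), K (x j) - K (x k)⟫ ≤ F j := by
    intro k j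
    have h1 := hy k (K (x j))
    rw [hfco k, hfco j, ← EReal.coe_add] at h1
    exact_mod_cast h1
  -- key decrease estimate
  have key1 : ∀ k, cδ * ‖x (k+1) - x k‖^2 ≤ (θ k - θ (k+1)) * F (k+1) := by
    intro k
    set v : EuclideanSpace ℝ (Fin n) :=
      u k - δ • gh (x k) + (θ k * δ) • (LinearMap.adjoint K) (y (k+1)) with hvdef
    have hveq : ∀ z : EuclideanSpace ℝ (Fin n),
        z - u k + δ • gh (x k) - (θ k * δ) • (LinearMap.adjoint K) (y (k+1)) = z - v := by
      intro z; rw [hvdef]; abel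
    have hmin : ∀ z ∈ S, g (x (k+1)) + (((2*δ)⁻¹ * ‖x (k+1) - v‖^2 : ℝ) : EReal)
        ≤ g z + (((2*δ)⁻¹ * ‖z - v‖^2 : ℝ) : EReal) := by
      intro z hz
      have h1 := hxmin k z hz
      rwa [hveq (x (k+1)), hveq z] at h1
    have hps : G (k+1) + (2*δ)⁻¹ * ‖x (k+1) - v‖^2
        ≤ G k + (2*δ)⁻¹ * ‖x k - v‖^2 - (2*δ)⁻¹ * ‖x k - x (k+1)‖^2 :=
      prox_step hSconv g hgP.1 hgconv δ hδ (x (k+1)) (x k) v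
        (hxS (k+1)).1 (hxS k).1 (hxS (k+1)).2 (hxS k).2 hmin
    set c : EuclideanSpace ℝ (Fin n) :=
      δ • gh (x k) - (θ k * δ) • (LinearMap.adjoint K) (y (k+1)) with hcdef
    have hzv : ∀ z : EuclideanSpace ℝ (Fin n), z - v = (z - u k) + c := by
      intro z; rw [hvdef, hcdef]; abel
    have hQ : ∀ z : EuclideanSpace ℝ (Fin n),
        ‖z - v‖^2 = ‖z - u k‖^2 + 2*⟪z - u k, c⟫ + ‖c‖^2 := by
      intro z; rw [hzv z, norm_add_sq_real]
    have hdiffc : ⟪x (k+1) - u k, c⟫ - ⟪x k - u k, c⟫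
        = δ * ⟪x (k+1) - x k, gh (x k)⟫
          - (θ k * δ) * ⟪K (x (k+1) - x k), y (k+1)⟫ := by
      rw [← inner_sub_left]
      have h1 : (x (k+1) - u k) - (x k - u k) = x (k+1) - x k := by abel
      rw [h1, hcdef, inner_sub_right, real_inner_smul_right, real_inner_smul_right,
        LinearMap.adjoint_inner_right]
    have e1 : (2*δ)⁻¹ * (2*⟪x (k+1) - u k, c⟫) - (2*δ)⁻¹ * (2*⟪x k - u k, c⟫)
        = ⟪x (k+1) - x k, gh (x k)⟫ - θ k * ⟪K (x (k+1) - x k), y (k+1)⟫ := by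
      have h1 : (2*δ)⁻¹ * (2*⟪x (k+1) - u k, c⟫) - (2*δ)⁻¹ * (2*⟪x k - u k, c⟫)
          = δ⁻¹ * (⟪x (k+1) - u k, c⟫ - ⟪x k - u k, c⟫) := by
        field_simp
      rw [h1, hdiffc]
      field_simp
    have hseg : segment ℝ (x k) (x (k+1)) ⊆ O :=
      subset_trans (hSconv.segment_subset (hxS k).1 (hxS (k+1)).1) hSO
    have hdesc := descent_lemma h gh O hgradO L hL hLipO (x k) (x (k+1)) hseg
    have hsub' : θ k * ⟪K (x (k+1) - x k), y (k+1)⟫ ≤ θ k * (F (k+1) - F k) := by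
      apply mul_le_mul_of_nonneg_left _ (hθnn k)
      have h1 := hyF k (k+1)
      rw [← map_sub] at h1
      rw [real_inner_comm]
      linarith
    have hup : x (k+1) - u (k+1) = (1 - σ) • (x (k+1) - u k) := by
      rw [hu k]
      simp only [smul_sub, sub_smul, one_smul]
      abel
    have hunorm : ‖x (k+1) - u (k+1)‖^2 ≤ ‖x (k+1) - u k‖^2 := by
      rw [hup, norm_smul, Real.norm_eq_abs, mul_pow, sq_abs]
      have hσ1 : (1-σ)^2 ≤ 1 := by nlinarith
      calc (1-σ)^2 * ‖x (k+1) - u k‖^2 ≤ 1 * ‖x (k+1) - u k‖^2 :=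
            mul_le_mul_of_nonneg_right hσ1 (sq_nonneg _)
        _ = ‖x (k+1) - u k‖^2 := one_mul _
    have hφk : φr k = θ k * F k := (hθF k).symm
    have hφk1 : φr (k+1) = θ (k+1) * F (k+1) := (hθF (k+1)).symm
    have hnrev : ‖x k - x (k+1)‖ = ‖x (k+1) - x k‖ := norm_sub_rev _ _
    have hic : ⟪x (k+1) - x k, gh (x k)⟫ = ⟪gh (x k), x (k+1) - x k⟫ :=
      real_inner_comm _ _
    rw [hQ (x (k+1)), hQ (x k), hnrev] at hps
    have hφr1 : φr (k+1) = G (k+1) + h (x (k+1)) + (2*δ)⁻¹ * ‖x (k+1) - u (k+1)‖^2 := by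
      rw [hφrdef]
    have hφr0 : φr k = G k + h (x k) + (2*δ)⁻¹ * ‖x k - u k‖^2 := by
      rw [hφrdef]
    have hmul : (2*δ)⁻¹ * ‖x (k+1) - u (k+1)‖^2 ≤ (2*δ)⁻¹ * ‖x (k+1) - u k‖^2 :=
      mul_le_mul_of_nonneg_left hunorm (by positivity)
    clear_value F G φr c v cδ
    have step1 : G (k+1) + h (x (k+1)) + (2*δ)⁻¹ * ‖x (k+1) - u k‖^2
        + ((2*δ)⁻¹ - L/2) * ‖x (k+1) - x k‖^2 ≤ θ k * F (k+1) := by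
      linarith [hps, e1, hdesc, hic, hsub', hφk, hφr0]
    rw [hcδdef]
    linarith [step1, hφk1, hφr1, hmul]
  -- θ is nonincreasing
  have hθdec : ∀ k, θ (k+1) ≤ θ k := by
    intro k
    by_contra hcon
    push_neg at hcon
    have h1 := key1 k
    nlinarith [hF0 (k+1), sq_nonneg ‖x (k+1) - x k‖]
  have hθ0b : ∀ k, θ k ≤ θ 0 := by
    intro k
    induction k with
    | zero => exact le_rfl
    | succ k ih => exact le_trans (hθdec k) ih
  -- steps vanish
  have hbd : ∀ k, ‖x (k+1) - x k‖^2 ≤ (θ k - θ (k+1)) * M / cδ := by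
    intro k
    have h1 := key1 k
    have h2 : (θ k - θ (k+1)) * F (k+1) ≤ (θ k - θ (k+1)) * M :=
      mul_le_mul_of_nonneg_left (hFM (k+1)) (by linarith [hθdec k])
    rw [le_div_iff₀ hcδ]
    nlinarith
  have hθsucc : Tendsto (fun k => θ (k+1)) atTop (𝓝 θbar) :=
    hθlim.comp (tendsto_add_atTop_nat 1)
  have hΔ : Tendsto (fun k => ‖x (k+1) - x k‖) atTop (𝓝 0) := by
    have hb : Tendsto (fun k => (θ k - θ (k+1)) * M / cδ) atTop (𝓝 0) := by
      have h2 := ((hθlim.sub hθsucc).mul_const M).div_const cδ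
      simpa using h2
    have hsq : Tendsto (fun k => Real.sqrt ((θ k - θ (k+1)) * M / cδ)) atTop (𝓝 0) := by
      have := hb.sqrt
      simpa using this
    apply squeeze_zero (fun k => norm_nonneg _) _ hsq
    intro k
    calc ‖x (k+1) - x k‖ = Real.sqrt (‖x (k+1) - x k‖^2) :=
          (Real.sqrt_sq (norm_nonneg _)).symm
      _ ≤ Real.sqrt ((θ k - θ (k+1)) * M / cδ) := Real.sqrt_le_sqrt (hbd k)
  -- bounded subgradients
  have hKcont : Continuous K := K.continuous_of_finiteDimensional
  have hKSc : IsCompact (K '' S) := hScomp.image hKcont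
  obtain ⟨R, hR⟩ := subgrad_bounded f hfP hfconv (K '' S) hKSc
    (by rintro _ ⟨z, hz, rfl⟩; exact hKS z hz)
  have hyR : ∀ k, ‖y (k+1)‖ ≤ R := fun k =>
    hR (K (x k)) ⟨x k, (hxS k).1, rfl⟩ _ (hy k)
  have hR0 : 0 ≤ R := le_trans (norm_nonneg _) (hyR 0)
  set Kc := LinearMap.toContinuousLinearMap K with hKcdef
  have hKb : ∀ z : EuclideanSpace ℝ (Fin n), ‖K z‖ ≤ ‖Kc‖ * ‖z‖ := fun z => Kc.le_opNorm z
  have hib : ∀ (j : ℕ) (a b : EuclideanSpace ℝ (Fin n)),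
      |⟪y (j+1), K a - K b⟫| ≤ (‖Kc‖ * R) * ‖a - b‖ := by
    intro j a b
    rw [← map_sub]
    calc |⟪y (j+1), K (a-b)⟫| ≤ ‖y (j+1)‖ * ‖K (a-b)‖ := abs_real_inner_le_norm _ _
      _ ≤ R * (‖Kc‖ * ‖a-b‖) :=
          mul_le_mul (hyR j) (hKb _) (norm_nonneg _) hR0
      _ = (‖Kc‖ * R) * ‖a-b‖ := by ring
  set e : ℕ → ℝ := fun k => ⟪K (x (k+1)), y (k+1)⟫ - ⟪K (x k), y (k+1)⟫ with hedef
  have heb : ∀ k, |e k| ≤ (‖Kc‖ * R) * ‖x (k+1) - x k‖ := by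
    intro k
    have h1 : e k = ⟪y (k+1), K (x (k+1)) - K (x k)⟫ := by
      rw [hedef, inner_sub_right, real_inner_comm (K (x (k+1))) (y (k+1)),
        real_inner_comm (K (x k)) (y (k+1))]
    rw [h1]
    exact hib k _ _
  have hcm : Tendsto (fun k => (‖Kc‖ * R) * ‖x (k+1) - x k‖) atTop (𝓝 0) := by
    have := hΔ.const_mul (‖Kc‖ * R)
    simpa using this
  have he0 : Tendsto e atTop (𝓝 0) :=
    squeeze_zero_norm (fun k => by rw [Real.norm_eq_abs]; exact heb k) hcm
  have hsb : ∀ k, |F k - F (k+1)| ≤ (‖Kc‖ * R) * ‖x (k+1) - x k‖ := by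
    intro k
    have h1 := hyF k (k+1)
    have h2 := hyF (k+1) k
    have b1 := abs_le.1 (hib k (x (k+1)) (x k))
    have b2 := abs_le.1 (hib (k+1) (x k) (x (k+1)))
    rw [abs_le]
    constructor
    · have : ‖x k - x (k+1)‖ = ‖x (k+1) - x k‖ := norm_sub_rev _ _
      rw [← this] at b1 ⊢
      linarith [b2.1, b2.2]
    · linarith [b1.1]
  have hs0 : Tendsto (fun k => F k - F (k+1)) atTop (𝓝 0) :=
    squeeze_zero_norm (fun k => by rw [Real.norm_eq_abs]; exact hsb k) hcm
  have hs' : Tendsto (fun k => F k - F (k+1) + e k) atTop (𝓝 0) := by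
    simpa using hs0.add he0
  -- conjugate identity
  have hconj : ∀ k, econj f (y (k+1)) = ((⟪K (x k), y (k+1)⟫ - F k : ℝ) : EReal) := by
    intro k
    apply le_antisymm
    · apply iSup_le
      intro z
      by_cases hz : f z = ⊤
      · rw [hz, EReal.sub_top]
        exact bot_le
      · have hfz : f z = (((f z).toReal : ℝ) : EReal) :=
          (EReal.coe_toReal hz (hfP.1 z)).symm
        rw [hfz, ← EReal.coe_sub, EReal.coe_le_coe_iff]
        have h1 := hy k z
        rw [hfco k, hfz, ← EReal.coe_add] at h1
        have h2 : F k + ⟪y (k+1), z - K (x k)⟫ ≤ (f z).toReal := by exact_mod_cast h1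
        have h3 : ⟪y (k+1), z - K (x k)⟫
            = ⟪z, y (k+1)⟫ - ⟪K (x k), y (k+1)⟫ := by
          rw [inner_sub_right, real_inner_comm (y (k+1)) z,
            real_inner_comm (y (k+1)) (K (x k))]
        rw [h3] at h2
        linarith
    · have h1 : ((⟪K (x k), y (k+1)⟫ - F k : ℝ) : EReal)
          = ((⟪K (x k), y (k+1)⟫ : ℝ) : EReal) - f (K (x k)) := by
        rw [hfco k, ← EReal.coe_sub]
      rw [h1]
      exact le_iSup (fun z => ((⟪z, y (k+1)⟫ : ℝ) : EReal) - f z) (K (x k))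
  -- rewrite varpi
  have hvarpi : ∀ k, varpiF S g h f K δ (x (k+1)) (y (k+1)) (u (k+1))
      = (((θ (k+1) * F (k+1)) / (F k + e k) : ℝ) : EReal) := by
    intro k
    unfold varpiF
    rw [hconj k, ← EReal.coe_sub, hphi (k+1), ← EReal.coe_div]
    congr 1
    rw [hθF (k+1)]
    congr 1
    simp only [hedef]
    ring
  -- real-valued limit
  have hDlb : ∀ᶠ k in atTop, m/2 ≤ F k + e k := by
    have h1 : ∀ᶠ k in atTop, |e k| < m/2 := by
      have h2 := he0 (Metric.ball_mem_nhds 0 (by positivity : (0:ℝ) < m/2))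
      filter_upwards [h2] with k hk
      simpa [Real.dist_eq] using hk
    filter_upwards [h1] with k hk
    have h3 := hFm k
    have h4 := abs_lt.1 hk
    linarith
  have hdiff0 : Tendsto
      (fun k => θ (k+1) * F (k+1) / (F k + e k) - θ (k+1)) atTop (𝓝 0) := by
    apply squeeze_zero_norm'
      (a := fun k => (θ 0 * 2 / m) * |F k - F (k+1) + e k|)
    · filter_upwards [hDlb] with k hD
      have hDpos : 0 < F k + e k := lt_of_lt_of_le (by positivity) hD
      have heq : θ (k+1) * F (k+1) / (F k + e k) - θ (k+1)
          = - (θ (k+1) * (F k - F (k+1) + e k)) / (F k + e k) := by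
        field_simp
        ring
      rw [Real.norm_eq_abs, heq, abs_div, abs_neg, abs_mul, abs_of_pos hDpos]
      have h2 : |θ (k+1)| ≤ θ 0 := by
        rw [abs_of_nonneg (hθnn _)]; exact hθ0b (k+1)
      calc |θ (k+1)| * |F k - F (k+1) + e k| / (F k + e k)
          ≤ θ 0 * |F k - F (k+1) + e k| / (m/2) := by
            apply div_le_div₀ (mul_nonneg (le_trans (abs_nonneg _) h2) (abs_nonneg _))
              (mul_le_mul_of_nonneg_right h2 (abs_nonneg _)) (by positivity) hD
        _ = (θ 0 * 2 / m) * |F k - F (k+1) + e k| := by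
            field_simp
    · have := hs'.abs.const_mul (θ 0 * 2 / m)
      simpa using this
  have hreal : Tendsto (fun k => θ (k+1) * F (k+1) / (F k + e k)) atTop (𝓝 θbar) := by
    have h1 := hdiff0.add hθsucc
    simpa using h1
  have hfinal := (continuous_coe_real_ereal.tendsto θbar).comp hreal
  refine Tendsto.congr (fun k => (hvarpi k).symm) ?_
  exact hfinal
end
end

section
/- (Theorem 3.5(iii)) Let the sequences (xᵏ, yᵏ, uᵏ, θ_k) be generated by the FPSA iteration, let m, M > 0 satisfy m ≤ f(Kxᵏ) ≤ M for all k, define ϖ(x,y,u) = φ(x,u)/(⟨Kx, y⟩ − f*(y)), and let θ̄ = lim_{k→∞} θ_k. Then ϖ(x̂, ŷ, û) = θ̄ for every accumulation point (x̂, ŷ, û) of the sequence (xᵏ, yᵏ, uᵏ). -/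
open Filter Metric Set RealInnerProductSpace
open scoped Topology Classical

noncomputable section

section AuxLemmas

lemma norm_combo {E : Type*} [NormedAddCommGroup E] [InnerProductSpace ℝ E]
    (a b c : E) (t : ℝ) :
    ‖(a + t • (b - a)) - c‖^2
      = (1-t)*‖a-c‖^2 + t*‖b-c‖^2 - t*(1-t)*‖b-a‖^2 := by
  have e1 : (a + t • (b - a)) - c = (a - c) + t • (b - a) := by abel
  have e2 : b - c = (a - c) + (b - a) := by abel
  rw [e1, e2, norm_add_sq_real, norm_add_sq_real, real_inner_smul_right, norm_smul,
    Real.norm_eq_abs, mul_pow, sq_abs]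
  ring

lemma norm_split {E : Type*} [NormedAddCommGroup E] [InnerProductSpace ℝ E]
    (p q : E) : ‖p + q‖^2 = ‖p‖^2 + 2*⟪p,q⟫ + ‖q‖^2 := norm_add_sq_real p q

lemma descent_lemma_s13 {E : Type*} [NormedAddCommGroup E] [InnerProductSpace ℝ E]
    [CompleteSpace E] {O : Set E} {h : E → ℝ} {gh : E → E} {L : ℝ}
    (hgrad : ∀ z ∈ O, HasGradientAt h (gh z) z)
    (hlip : ∀ z ∈ O, ∀ w ∈ O, ‖gh z - gh w‖ ≤ L * ‖z - w‖)
    {x z : E} (hseg : ∀ t : ℝ, t ∈ Icc (0:ℝ) 1 → x + t • (z - x) ∈ O) :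
    h z ≤ h x + ⟪gh x, z - x⟫ + L / 2 * ‖z - x‖ ^ 2 := by
  set v := z - x with hv
  set γ : ℝ → E := fun t => x + t • v with hγ
  set ψ : ℝ → ℝ := fun t => h (γ t) - t * ⟪gh x, v⟫ - (L/2*‖v‖^2) * t^2 with hψ
  have hderiv : ∀ t ∈ Icc (0:ℝ) 1,
      HasDerivAt ψ (⟪gh (γ t), v⟫ - ⟪gh x, v⟫ - (L/2*‖v‖^2) * (2*t)) t := by
    intro t ht
    have hγd : HasDerivAt γ v t := by
      simpa [hγ] using ((hasDerivAt_id t).smul_const v).const_add x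
    have hhd : HasDerivAt (fun s => h (γ s)) ⟪gh (γ t), v⟫ t := by
      have := ((hgrad _ (hseg t ht)).hasFDerivAt.comp_hasDerivAt t hγd)
      simpa [InnerProductSpace.toDual_apply_apply, hγ, Function.comp_def] using this
    have h2 : HasDerivAt (fun s : ℝ => s * ⟪gh x, v⟫) ⟪gh x, v⟫ t := by
      simpa using (hasDerivAt_id t).mul_const ⟪gh x, v⟫
    have h3 := (hasDerivAt_pow 2 t).const_mul (L/2*‖v‖^2)
    have := (hhd.sub h2).sub h3
    refine this.congr_deriv ?_
    push_cast
    ring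
  have hanti : AntitoneOn ψ (Icc (0:ℝ) 1) := by
    apply antitoneOn_of_deriv_nonpos (convex_Icc 0 1)
    · exact fun t ht => ((hderiv t ht).continuousAt).continuousWithinAt
    · intro t ht
      rw [interior_Icc] at ht
      exact ((hderiv t (Ioo_subset_Icc_self ht)).differentiableAt).differentiableWithinAt
    · intro t ht
      rw [interior_Icc] at ht
      rw [(hderiv t (Ioo_subset_Icc_self ht)).deriv]
      have h1 : ⟪gh (γ t), v⟫ - ⟪gh x, v⟫ = ⟪gh (γ t) - gh x, v⟫ := by
        rw [inner_sub_left]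
      have h2 : ⟪gh (γ t) - gh x, v⟫ ≤ ‖gh (γ t) - gh x‖ * ‖v‖ := real_inner_le_norm _ _
      have hx0 : x ∈ O := by simpa [hγ] using hseg 0 ⟨le_refl _, zero_le_one⟩
      have h3 : ‖gh (γ t) - gh x‖ ≤ L * ‖γ t - x‖ :=
        hlip _ (hseg t (Ioo_subset_Icc_self ht)) _ hx0
      have h4 : ‖γ t - x‖ = t * ‖v‖ := by
        simp [hγ, norm_smul, Real.norm_eq_abs, abs_of_nonneg ht.1.le]
      rw [h4] at h3
      have h5 := mul_le_mul_of_nonneg_right h3 (norm_nonneg v)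
      nlinarith [h1, h2, h5]
  have h01 := hanti (left_mem_Icc.2 zero_le_one) (right_mem_Icc.2 zero_le_one) zero_le_one
  have hγ1 : γ 1 = z := by simp [hγ, hv]
  have hγ0 : γ 0 = x := by simp [hγ]
  simp only [hψ, hγ1, hγ0] at h01
  nlinarith [h01]

lemma strong_prox {E : Type*} [NormedAddCommGroup E] [InnerProductSpace ℝ E]
    {S : Set E} (hSconv : Convex ℝ S) {g : E → EReal} (hgconv : ERealConvex g)
    {q : ℝ} {c x₁ : E} (hx₁ : x₁ ∈ S) {G1 : ℝ} (hG1 : g x₁ = (G1 : ℝ))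
    (hmin : ∀ w ∈ S, g x₁ + ((q * ‖x₁ - c‖^2 : ℝ) : EReal) ≤ g w + ((q * ‖w - c‖^2 : ℝ) : EReal))
    {w : E} (hw : w ∈ S) {Gw : ℝ} (hGw : g w = (Gw : ℝ)) :
    G1 + q * ‖x₁ - c‖^2 + q * ‖w - x₁‖^2 ≤ Gw + q * ‖w - c‖^2 := by
  have key : ∀ t ∈ Ioo (0:ℝ) 1,
      G1 + q * ‖x₁ - c‖^2 + (1-t) * (q * ‖w - x₁‖^2) ≤ Gw + q * ‖w - c‖^2 := by
    intro t ht
    have hzS : x₁ + t • (w - x₁) ∈ S := by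
      have := hSconv hx₁ hw (by linarith [ht.2] : (0:ℝ) ≤ 1 - t) ht.1.le (by ring)
      convert this using 1
      module
    have hconv := hgconv x₁ w (1-t) t (by linarith [ht.2]) ht.1.le (by ring)
    have hzeq : (1-t) • x₁ + t • w = x₁ + t • (w - x₁) := by module
    rw [hzeq, hG1, hGw, ← EReal.coe_mul, ← EReal.coe_mul, ← EReal.coe_add] at hconv
    have hminz := hmin _ hzS
    have hchain : g x₁ + ((q * ‖x₁ - c‖^2 : ℝ) : EReal)
        ≤ (((1-t)*G1 + t*Gw : ℝ) : EReal) + ((q * ‖x₁ + t • (w - x₁) - c‖^2 : ℝ) : EReal) :=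
      le_trans hminz (add_le_add_left hconv _)
    rw [hG1, ← EReal.coe_add, ← EReal.coe_add, EReal.coe_le_coe_iff, norm_combo] at hchain
    have hmul : t * (G1 + q * ‖x₁ - c‖^2 + (1-t) * (q * ‖w - x₁‖^2))
        ≤ t * (Gw + q * ‖w - c‖^2) := by nlinarith [hchain]
    exact le_of_mul_le_mul_left hmul ht.1
  have htend : Tendsto (fun t : ℝ => G1 + q * ‖x₁ - c‖^2 + (1-t) * (q * ‖w - x₁‖^2))
      (𝓝[>] (0:ℝ)) (𝓝 (G1 + q * ‖x₁ - c‖^2 + q * ‖w - x₁‖^2)) := by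
    have hcont : Continuous (fun t : ℝ => G1 + q * ‖x₁ - c‖^2 + (1-t) * (q * ‖w - x₁‖^2)) := by
      continuity
    have := (hcont.tendsto 0).mono_left (nhdsWithin_le_nhds (s := Ioi (0:ℝ)))
    simpa using this
  refine le_of_tendsto htend ?_
  filter_upwards [Ioo_mem_nhdsGT_of_mem (by norm_num : (0:ℝ) ∈ Ico (0:ℝ) 1)] with t ht
  exact key t ht

end AuxLemmas

set_option maxHeartbeats 2000000 in
theorem stmt13 {n p : ℕ}
    (S : Set (EuclideanSpace ℝ (Fin n)))
    (g : EuclideanSpace ℝ (Fin n) → EReal)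
    (h : EuclideanSpace ℝ (Fin n) → ℝ)
    (gh : EuclideanSpace ℝ (Fin n) → EuclideanSpace ℝ (Fin n))
    (f : EuclideanSpace ℝ (Fin p) → EReal)
    (K : EuclideanSpace ℝ (Fin n) →ₗ[ℝ] EuclideanSpace ℝ (Fin p))
    (L δ : ℝ)
    (hS : S.Nonempty) (hSconv : Convex ℝ S) (hScomp : IsCompact S)
    (hgP : ERealProper g) (hgconv : ERealConvex g) (hglsc : LowerSemicontinuous g)
    (hfP : ERealProper f) (hfconv : ERealConvex f) (hflsc : LowerSemicontinuous f)
    (hL : 0 < L)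
    (hhC1 : ∃ O : Set (EuclideanSpace ℝ (Fin n)), IsOpen O ∧ S ⊆ O ∧
      (∀ z ∈ O, HasGradientAt h (gh z) z) ∧
      (∀ z ∈ O, ∀ w ∈ O, ‖gh z - gh w‖ ≤ L * ‖z - w‖))
    (hKS : ∀ z ∈ S, K z ∈ interior (edom f))
    (hfpos : ∀ z ∈ S, (0 : EReal) < f (K z))
    (hghnn : ∀ z ∈ S, (0 : EReal) ≤ g z + ((h z : ℝ) : EReal))
    (hSg : ∃ z ∈ S, g z ≠ ⊤)
    (hδ : 0 < δ) (hδL : δ < 1 / L)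
    (σ : ℝ) (hσ : 0 < σ) (hσ2 : σ < 2)
    (x u : ℕ → EuclideanSpace ℝ (Fin n)) (y : ℕ → EuclideanSpace ℝ (Fin p)) (θ : ℕ → ℝ)
    (hxS : ∀ k, x k ∈ S ∧ g (x k) ≠ ⊤)
    (hy : ∀ k, y (k+1) ∈ csubdiff f (K (x k)))
    (hxmin : ∀ k, ∀ w ∈ S,
      g (x (k+1)) + (((2*δ)⁻¹ * ‖x (k+1) - u k + δ • gh (x k)
          - (θ k * δ) • (LinearMap.adjoint K) (y (k+1))‖ ^ 2 : ℝ) : EReal)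
        ≤ g w + (((2*δ)⁻¹ * ‖w - u k + δ • gh (x k)
          - (θ k * δ) • (LinearMap.adjoint K) (y (k+1))‖ ^ 2 : ℝ) : EReal))
    (hu : ∀ k, u (k+1) = (1 - σ) • u k + σ • x (k+1))
    (hθ : ∀ k, (θ k : EReal) = varthetaF S g h f K δ (x k) (u k))
    (hθnn : ∀ k, 0 ≤ θ k)
    (m M : ℝ) (hm : 0 < m)
    (hmM : ∀ k, (m : EReal) ≤ f (K (x k)) ∧ f (K (x k)) ≤ (M : EReal))
    (θbar : ℝ) (hθlim : Tendsto θ atTop (𝓝 θbar))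
    :
    ∀ (xh : EuclideanSpace ℝ (Fin n)) (yh : EuclideanSpace ℝ (Fin p))
        (uh : EuclideanSpace ℝ (Fin n)),
      (∃ φ : ℕ → ℕ, StrictMono φ ∧
          Tendsto (fun j => (x (φ j), y (φ j), u (φ j))) atTop (𝓝 (xh, yh, uh))) →
      varpiF S g h f K δ xh yh uh = ((θbar : ℝ) : EReal) := by
  intro xh yh uh hacc
  obtain ⟨φ, hφmono, hφtend⟩ := hacc
  obtain ⟨O, hOopen, hSO, hOgrad, hOlip⟩ := hhC1
  -- basic positivity facts
  have hδ0 : δ ≠ 0 := ne_of_gt hδ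
  have h2δ : (0:ℝ) < 2*δ := by linarith
  have hq : (0:ℝ) < (2*δ)⁻¹ := by positivity
  have hLδ : δ * L < 1 := (lt_div_iff₀ hL).mp hδL
  have hc1 : L/2 < (2*δ)⁻¹ := by
    rw [inv_eq_one_div, lt_div_iff₀ h2δ]; nlinarith
  have hβ : (0:ℝ) < 1 - (1-σ)^2 := by nlinarith
  -- real-valued versions
  have hgbot : ∀ z, g z ≠ ⊥ := hgP.1
  set G : ℕ → ℝ := fun k => (g (x k)).toReal with hGdef
  have hG : ∀ k, g (x k) = ((G k : ℝ) : EReal) :=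
    fun k => (EReal.coe_toReal (hxS k).2 (hgbot _)).symm
  have hfdom : ∀ z ∈ S, f (K z) ≠ ⊤ := fun z hz => interior_subset (hKS z hz)
  set F : EuclideanSpace ℝ (Fin p) → ℝ := fun z => (f z).toReal with hFdef
  have hfF : ∀ z, f z ≠ ⊤ → f z = ((F z : ℝ) : EReal) :=
    fun z hz => (EReal.coe_toReal hz (hfP.1 z)).symm
  set fK : ℕ → ℝ := fun k => F (K (x k)) with hfKdef
  have hfK : ∀ k, f (K (x k)) = ((fK k : ℝ) : EReal) := fun k => hfF _ (hfdom _ (hxS k).1)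
  have hfKm : ∀ k, m ≤ fK k := by
    intro k; have := (hmM k).1; rw [hfK k] at this; exact EReal.coe_le_coe_iff.1 this
  have hfKM : ∀ k, fK k ≤ M := by
    intro k; have := (hmM k).2; rw [hfK k] at this; exact EReal.coe_le_coe_iff.1 this
  set Φ : ℕ → ℝ := fun k => G k + h (x k) + (2*δ)⁻¹ * ‖x k - u k‖^2 with hΦdef
  have hphiFk : ∀ k, phiF S g h δ (x k) (u k) = ((Φ k : ℝ) : EReal) := by
    intro k
    rw [phiF, hG k]
    simp only [if_pos (hxS k).1, add_zero]
    norm_cast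
  have hθeq : ∀ k, Φ k = θ k * fK k := by
    intro k
    have h1 := hθ k
    rw [varthetaF, hphiFk k, hfK k, ← EReal.coe_div] at h1
    have h2 : θ k = Φ k / fK k := EReal.coe_eq_coe_iff.1 h1
    have hne : fK k ≠ 0 := ne_of_gt (lt_of_lt_of_le hm (hfKm k))
    rw [h2, div_mul_cancel₀ _ hne]
  -- the prox centers
  set Kd := LinearMap.adjoint K with hKdd
  set c : ℕ → EuclideanSpace ℝ (Fin n) :=
    fun k => u k - δ • gh (x k) + (θ k * δ) • Kd (y (k+1)) with hc
  have hcw : ∀ k (w : EuclideanSpace ℝ (Fin n)),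
      w - u k + δ • gh (x k) - (θ k * δ) • Kd (y (k+1)) = w - c k := by
    intro k w; rw [hc]; module
  have hxmin' : ∀ k, ∀ w ∈ S,
      g (x (k+1)) + (((2*δ)⁻¹ * ‖x (k+1) - c k‖^2 : ℝ) : EReal)
        ≤ g w + (((2*δ)⁻¹ * ‖w - c k‖^2 : ℝ) : EReal) := by
    intro k w hw
    have := hxmin k w hw
    rwa [hcw, hcw] at this
  have hSP : ∀ k, ∀ w ∈ S, ∀ Gw : ℝ, g w = (Gw : EReal) →
      G (k+1) + (2*δ)⁻¹*‖x (k+1) - c k‖^2 + (2*δ)⁻¹*‖w - x (k+1)‖^2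
        ≤ Gw + (2*δ)⁻¹*‖w - c k‖^2 :=
    fun k w hw Gw hGw => strong_prox hSconv hgconv (hxS (k+1)).1 (hG (k+1)) (hxmin' k) hw hGw
  -- descent inequality
  have hDes : ∀ k, h (x (k+1)) ≤ h (x k) + ⟪gh (x k), x (k+1) - x k⟫
      + L/2*‖x (k+1) - x k‖^2 := by
    intro k
    apply descent_lemma_s13 hOgrad hOlip
    intro t ht
    apply hSO
    have := hSconv (hxS k).1 (hxS (k+1)).1 (by linarith [ht.2] : (0:ℝ) ≤ 1 - t) ht.1 (by ring)
    convert this using 1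
    module
  -- subgradient inequality at x (k+1)
  have hCsub : ∀ k, fK k + ⟪y (k+1), K (x (k+1)) - K (x k)⟫ ≤ fK (k+1) := by
    intro k
    have h1 := hy k (K (x (k+1)))
    rw [hfK k, hfK (k+1), ← EReal.coe_add, EReal.coe_le_coe_iff] at h1
    exact h1
  -- one-step decrease
  have hstep : ∀ k, Φ (k+1) + ((2*δ)⁻¹ - L/2) * ‖x (k+1) - x k‖^2
      + ((2*δ)⁻¹ * (1 - (1-σ)^2)) * ‖x (k+1) - u k‖^2
      ≤ Φ k + θ k * (fK (k+1) - fK k) := by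
    intro k
    have hA := hSP k (x k) (hxS k).1 (G k) (hG k)
    have r1 : ‖x (k+1) - c k‖^2 = ‖x k - c k‖^2 + 2*⟪x k - c k, x (k+1) - x k⟫
        + ‖x (k+1) - x k‖^2 := by
      have e : x (k+1) - c k = (x k - c k) + (x (k+1) - x k) := by abel
      rw [e, norm_split]
    have hadj : ⟪Kd (y (k+1)), x (k+1) - x k⟫ = ⟪y (k+1), K (x (k+1)) - K (x k)⟫ := by
      rw [hKdd, LinearMap.adjoint_inner_left, map_sub]
    have rinner : ⟪x k - c k, x (k+1) - x k⟫
        = ⟪x k - u k, x (k+1) - x k⟫ + δ * ⟪gh (x k), x (k+1) - x k⟫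
          - (θ k * δ) * ⟪y (k+1), K (x (k+1)) - K (x k)⟫ := by
      have e : x k - c k = (x k - u k) + δ • gh (x k) - (θ k * δ) • Kd (y (k+1)) := by
        rw [hc]; module
      rw [e, inner_sub_left, inner_add_left, real_inner_smul_left, real_inner_smul_left, hadj]
    rw [r1, rinner] at hA
    have hre : ‖x k - x (k+1)‖ = ‖x (k+1) - x k‖ := norm_sub_rev _ _
    rw [hre] at hA
    have hcanc : (2*δ)⁻¹ * (‖x k - c k‖^2
          + 2*(⟪x k - u k, x (k+1) - x k⟫ + δ * ⟪gh (x k), x (k+1) - x k⟫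
            - (θ k * δ) * ⟪y (k+1), K (x (k+1)) - K (x k)⟫) + ‖x (k+1) - x k‖^2)
        = (2*δ)⁻¹*‖x k - c k‖^2 + 2*(2*δ)⁻¹*⟪x k - u k, x (k+1) - x k⟫
          + ⟪gh (x k), x (k+1) - x k⟫ - θ k * ⟪y (k+1), K (x (k+1)) - K (x k)⟫
          + (2*δ)⁻¹*‖x (k+1) - x k‖^2 := by
      field_simp
      ring
    rw [hcanc] at hA
    have hB := hDes k
    have hCθ : θ k * ⟪y (k+1), K (x (k+1)) - K (x k)⟫ ≤ θ k * (fK (k+1) - fK k) :=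
      mul_le_mul_of_nonneg_left (by linarith [hCsub k]) (hθnn k)
    have r2 : ‖x (k+1) - u (k+1)‖^2 = (1-σ)^2 * ‖x (k+1) - u k‖^2 := by
      have e : x (k+1) - u (k+1) = (1-σ) • (x (k+1) - u k) := by rw [hu k]; module
      rw [e, norm_smul, Real.norm_eq_abs, mul_pow, sq_abs]
    have r3 : ‖x (k+1) - u k‖^2 = ‖x k - u k‖^2 + 2*⟪x k - u k, x (k+1) - x k⟫
        + ‖x (k+1) - x k‖^2 := by
      have e : x (k+1) - u k = (x k - u k) + (x (k+1) - x k) := by abel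
      rw [e, norm_split]
    have r3Q : (2*δ)⁻¹*‖x (k+1) - u k‖^2 = (2*δ)⁻¹*‖x k - u k‖^2
        + 2*(2*δ)⁻¹*⟪x k - u k, x (k+1) - x k⟫ + (2*δ)⁻¹*‖x (k+1) - x k‖^2 := by
      rw [r3]; ring
    simp only [hΦdef]
    rw [r2]
    linarith [hA, hB, hCθ, r3Q]
  -- θ is nonincreasing, with quantitative decrease
  have hkey : ∀ k, ((2*δ)⁻¹ - L/2) * ‖x (k+1) - x k‖^2 ≤ (θ k - θ (k+1)) * fK (k+1) := by
    intro k
    have ha2 : (0:ℝ) ≤ ‖x (k+1) - u k‖^2 := by positivity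
    have h1 := hstep k
    rw [hθeq k, hθeq (k+1)] at h1
    linarith [h1, mul_nonneg (mul_pos hq hβ).le ha2]
  have hθmono : ∀ k, θ (k+1) ≤ θ k := by
    intro k
    have hd2 : (0:ℝ) ≤ ‖x (k+1) - x k‖^2 := by positivity
    have h0 : 0 ≤ (θ k - θ (k+1)) * fK (k+1) := by
      have := mul_nonneg (by linarith [hc1] : (0:ℝ) ≤ (2*δ)⁻¹ - L/2) hd2
      linarith [hkey k]
    have hfk1 : (0:ℝ) < fK (k+1) := lt_of_lt_of_le hm (hfKm (k+1))
    have := (mul_nonneg_iff_of_pos_right hfk1).mp h0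
    linarith
  have hθanti : Antitone θ := antitone_nat_of_succ_le hθmono
  have h1δL : (0:ℝ) < 1 - δ*L := by linarith
  have hkey2 : ∀ k, (1 - δ*L) * ‖x (k+1) - x k‖^2 ≤ (θ k - θ (k+1)) * (2*δ*M) := by
    intro k
    calc (1 - δ*L) * ‖x (k+1) - x k‖^2
        = 2*δ*(((2*δ)⁻¹ - L/2) * ‖x (k+1) - x k‖^2) := by field_simp
      _ ≤ 2*δ*((θ k - θ (k+1)) * fK (k+1)) :=
          mul_le_mul_of_nonneg_left (hkey k) h2δ.le
      _ ≤ (θ k - θ (k+1)) * (2*δ*M) := by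
          linarith [mul_le_mul_of_nonneg_left (hfKM (k+1))
            (mul_nonneg h2δ.le (sub_nonneg.2 (hθmono k)))]
  -- steps go to zero
  have hθsucc : Tendsto (fun k => θ (k+1)) atTop (𝓝 θbar) :=
    hθlim.comp (tendsto_add_atTop_nat 1)
  have hΔθ : Tendsto (fun k => θ k - θ (k+1)) atTop (𝓝 0) := by
    simpa using hθlim.sub hθsucc
  have hd2to : Tendsto (fun k => ‖x (k+1) - x k‖^2) atTop (𝓝 0) := by
    apply squeeze_zero (g := fun k => (θ k - θ (k+1)) * (2*δ*M) / (1 - δ*L))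
      (fun k => by positivity)
    · intro k; rw [le_div_iff₀ h1δL]; linarith [hkey2 k]
    · have : Tendsto (fun k => (θ k - θ (k+1)) * (2*δ*M) / (1-δ*L)) atTop
          (𝓝 (0 * (2*δ*M) / (1-δ*L))) := (hΔθ.mul_const _).div_const _
      simpa using this
  have hdto : Tendsto (fun k => x (k+1) - x k) atTop (𝓝 0) := by
    rw [tendsto_zero_iff_norm_tendsto_zero]
    have h1 : Tendsto (fun k => Real.sqrt (‖x (k+1) - x k‖^2)) atTop (𝓝 (Real.sqrt 0)) :=
      (Real.continuous_sqrt.tendsto 0).comp hd2to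
    have h2 : (fun k => Real.sqrt (‖x (k+1) - x k‖^2)) = fun k => ‖x (k+1) - x k‖ :=
      funext fun k => Real.sqrt_sq (norm_nonneg _)
    rw [h2] at h1
    simpa using h1
  -- components of the accumulation point
  have htx : Tendsto (fun j => x (φ j)) atTop (𝓝 xh) :=
    (continuous_fst.tendsto _).comp hφtend
  have hty : Tendsto (fun j => y (φ j)) atTop (𝓝 yh) :=
    ((continuous_fst.comp continuous_snd).tendsto _).comp hφtend
  have htu : Tendsto (fun j => u (φ j)) atTop (𝓝 uh) :=
    ((continuous_snd.comp continuous_snd).tendsto _).comp hφtend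
  have hφtop : Tendsto φ atTop atTop := hφmono.tendsto_atTop
  have hxhS : xh ∈ S :=
    hScomp.isClosed.mem_of_tendsto htx (Eventually.of_forall fun j => (hxS _).1)
  have hθφ : Tendsto (fun j => θ (φ j)) atTop (𝓝 θbar) := hθlim.comp hφtop
  -- convexity and continuity of F on the interior of the domain
  have hedomconv : Convex ℝ (edom f) := by
    intro z hz w hw a b ha hb hab
    have h1 := hfconv z w a b ha hb hab
    rw [hfF z hz, hfF w hw, ← EReal.coe_mul, ← EReal.coe_mul, ← EReal.coe_add] at h1
    exact ne_top_of_le_ne_top (EReal.coe_ne_top _) h1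
  have hFconvOn : ConvexOn ℝ (interior (edom f)) F := by
    refine ⟨hedomconv.interior, ?_⟩
    intro z hz w hw a b ha hb hab
    have h1 := hfconv z w a b ha hb hab
    rw [hfF z (interior_subset hz), hfF w (interior_subset hw), ← EReal.coe_mul,
      ← EReal.coe_mul, ← EReal.coe_add] at h1
    have hne : f (a • z + b • w) ≠ ⊤ := ne_top_of_le_ne_top (EReal.coe_ne_top _) h1
    rw [hfF _ hne, EReal.coe_le_coe_iff] at h1
    simpa [smul_eq_mul] using h1
  have hFcont : ContinuousOn F (interior (edom f)) := hFconvOn.continuousOn isOpen_interior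
  have hKcont : Continuous K := K.continuous_of_finiteDimensional
  have hKxhU : K xh ∈ interior (edom f) := hKS xh hxhS
  have hFat : ContinuousAt F (K xh) := hFcont.continuousAt (isOpen_interior.mem_nhds hKxhU)
  set fh := F (K xh) with hfh
  have htKx : Tendsto (fun j => K (x (φ j))) atTop (𝓝 (K xh)) := (hKcont.tendsto _).comp htx
  have hfKto : Tendsto (fun j => fK (φ j)) atTop (𝓝 fh) := hFat.tendsto.comp htKx
  have hfhm : m ≤ fh := ge_of_tendsto hfKto (Eventually.of_forall fun j => hfKm _)
  have hfhpos : (0:ℝ) < fh := lt_of_lt_of_le hm hfhm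
  -- the shifted subsequence also converges to xh
  have hsub1 : ∀ j, 1 ≤ j → (φ j - 1) + 1 = φ j :=
    fun j hj => Nat.succ_pred_eq_of_pos (lt_of_lt_of_le hj (hφmono.le_apply))
  have hφ1top : Tendsto (fun j => φ j - 1) atTop atTop :=
    (tendsto_sub_atTop_nat 1).comp hφtop
  have htx' : Tendsto (fun j => x (φ j - 1)) atTop (𝓝 xh) := by
    have h1 : Tendsto (fun j => x ((φ j - 1) + 1) - x (φ j - 1)) atTop (𝓝 0) :=
      hdto.comp hφ1top
    have h0 : Tendsto (fun j => x ((φ j - 1) + 1)) atTop (𝓝 xh) := by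
      apply htx.congr'
      filter_upwards [eventually_ge_atTop 1] with j hj
      rw [hsub1 j hj]
    have h2 := h0.sub h1
    rw [sub_zero] at h2
    apply h2.congr
    intro j
    abel
  have htKx' : Tendsto (fun j => K (x (φ j - 1))) atTop (𝓝 (K xh)) :=
    (hKcont.tendsto _).comp htx'
  have hfKx' : Tendsto (fun j => F (K (x (φ j - 1)))) atTop (𝓝 fh) := hFat.tendsto.comp htKx'
  -- yh is a subgradient of f at K xh
  have hyh : ∀ w, ((fh : ℝ) : EReal) + ((⟪yh, w - K xh⟫ : ℝ) : EReal) ≤ f w := by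
    intro w
    by_cases hfw : f w = ⊤
    · rw [hfw]; exact le_top
    · rw [hfF w hfw, ← EReal.coe_add, EReal.coe_le_coe_iff]
      have hev : ∀ᶠ j in atTop,
          F (K (x (φ j - 1))) + ⟪y (φ j), w - K (x (φ j - 1))⟫ ≤ F w := by
        filter_upwards [eventually_ge_atTop 1] with j hj
        have h1 := hy (φ j - 1) w
        rw [hsub1 j hj] at h1
        rw [hfF _ (hfdom _ (hxS _).1), hfF w hfw, ← EReal.coe_add,
          EReal.coe_le_coe_iff] at h1
        exact h1
      have hlim : Tendsto (fun j => F (K (x (φ j - 1))) + ⟪y (φ j), w - K (x (φ j - 1))⟫)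
          atTop (𝓝 (fh + ⟪yh, w - K xh⟫)) :=
        hfKx'.add (hty.inner (tendsto_const_nhds.sub htKx'))
      exact le_of_tendsto hlim hev
  -- value of the conjugate
  have hconj : econj f yh = ((⟪K xh, yh⟫ - fh : ℝ) : EReal) := by
    apply le_antisymm
    · rw [econj]
      apply iSup_le
      intro z
      by_cases hfz : f z = ⊤
      · rw [hfz]
        simp
      · rw [hfF z hfz, ← EReal.coe_sub, EReal.coe_le_coe_iff]
        have h1 := hyh z
        rw [hfF z hfz, ← EReal.coe_add, EReal.coe_le_coe_iff] at h1
        have h2 : ⟪yh, z - K xh⟫ = ⟪z, yh⟫ - ⟪K xh, yh⟫ := by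
          rw [inner_sub_right, real_inner_comm]
          rw [real_inner_comm yh (K xh)]
        linarith
    · have h1 : ((⟪K xh, yh⟫ : ℝ) : EReal) - f (K xh)
          ≤ ⨆ z, (((⟪z, yh⟫ : ℝ) : EReal) - f z) :=
        le_iSup (fun z => (((⟪z, yh⟫ : ℝ) : EReal) - f z)) (K xh)
      rw [hfF _ (hfdom xh hxhS), ← EReal.coe_sub] at h1
      exact h1
  have hden : ((⟪K xh, yh⟫ : ℝ) : EReal) - econj f yh = ((fh : ℝ) : EReal) := by
    rw [hconj, ← EReal.coe_sub, EReal.coe_eq_coe_iff]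
    ring
  -- uniform bounds
  obtain ⟨R, hR⟩ := hScomp.exists_bound_of_continuousOn continuous_id.continuousOn
  have hR' : ∀ z ∈ S, ‖z‖ ≤ R := fun z hz => hR z hz
  obtain ⟨s0, hs0⟩ := hS
  have hRg : ∀ z ∈ S, ‖gh z‖ ≤ ‖gh s0‖ + L*(R + R) := by
    intro z hz
    have h1 : ‖gh z‖ ≤ ‖gh z - gh s0‖ + ‖gh s0‖ := by
      have := norm_add_le (gh z - gh s0) (gh s0)
      simpa using this
    have h2 : ‖gh z - gh s0‖ ≤ L * ‖z - s0‖ := hOlip z (hSO hz) s0 (hSO hs0)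
    have h3 : ‖z - s0‖ ≤ R + R := le_trans (norm_sub_le _ _) (add_le_add (hR' z hz) (hR' s0 hs0))
    nlinarith [mul_le_mul_of_nonneg_left h3 hL.le]
  set ρ := |1-σ| with hρdef
  have hρ : ρ < 1 := abs_lt.2 ⟨by linarith, by linarith⟩
  have hρ0 : 0 ≤ ρ := abs_nonneg _
  set Ru := max (‖u 0‖) (σ*R/(1-ρ)) with hRudef
  have hRu : ∀ k, ‖u k‖ ≤ Ru := by
    intro k
    induction k with
    | zero => exact le_max_left _ _
    | succ k ih =>
      rw [hu k]
      have h1 : ‖(1-σ) • u k + σ • x (k+1)‖ ≤ ρ * ‖u k‖ + σ * ‖x (k+1)‖ := by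
        refine le_trans (norm_add_le _ _) ?_
        have e1 : ‖(1-σ) • u k‖ = ρ * ‖u k‖ := by
          rw [hρdef, norm_smul, Real.norm_eq_abs]
        have e2 : ‖σ • x (k+1)‖ = σ * ‖x (k+1)‖ := by
          rw [norm_smul, Real.norm_eq_abs, abs_of_pos hσ]
        rw [e1, e2]
      have h2 : σ*R ≤ (1-ρ)*Ru := by
        have h3 := mul_le_mul_of_nonneg_left (le_max_right (‖u 0‖) (σ*R/(1-ρ)))
          (by linarith : (0:ℝ) ≤ 1-ρ)
        have h4 : (1-ρ)*(σ*R/(1-ρ)) = σ*R := by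
          rw [mul_comm, div_mul_cancel₀ _ (ne_of_gt (show (0:ℝ) < 1-ρ by linarith))]
        linarith
      have h5 : ‖x (k+1)‖ ≤ R := hR' _ (hxS (k+1)).1
      nlinarith [mul_le_mul_of_nonneg_left ih hρ0, mul_le_mul_of_nonneg_left h5 hσ.le]
  -- bound on the y sequence
  have hKim : IsCompact (K '' S) := hScomp.image hKcont
  have hKimU : K '' S ⊆ interior (edom f) := by
    rintro _ ⟨z, hz, rfl⟩
    exact hKS z hz
  obtain ⟨r, hr, hrsub⟩ := hKim.exists_cthickening_subset_open isOpen_interior hKimU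
  have hCcomp : IsCompact (cthickening r (K '' S)) :=
    isCompact_of_isClosed_isBounded isClosed_cthickening hKim.isBounded.cthickening
  obtain ⟨B, hB⟩ := hCcomp.exists_bound_of_continuousOn (hFcont.mono hrsub)
  have hB0 : 0 ≤ B := by
    have hz : K s0 ∈ cthickening r (K '' S) :=
      self_subset_cthickening _ (mem_image_of_mem _ hs0)
    exact le_trans (norm_nonneg _) (hB _ hz)
  have hRy : ∀ k, ‖y (k+1)‖ ≤ 2*B/r := by
    intro k
    by_cases hy0 : y (k+1) = 0
    · rw [hy0, norm_zero]
      positivity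
    · have hyn : (0:ℝ) < ‖y (k+1)‖ := norm_pos_iff.2 hy0
      set z := K (x k) with hz
      have hzC : z ∈ K '' S := mem_image_of_mem _ (hxS k).1
      set w := z + (r / ‖y (k+1)‖) • y (k+1) with hw
      have hwz : w - z = (r / ‖y (k+1)‖) • y (k+1) := by rw [hw]; abel
      have hwd : dist w z ≤ r := by
        rw [dist_eq_norm, hwz, norm_smul, Real.norm_eq_abs, abs_of_pos (div_pos hr hyn)]
        rw [div_mul_cancel₀ _ (ne_of_gt hyn)]
      have hwC : w ∈ cthickening r (K '' S) := mem_cthickening_of_dist_le w z r _ hzC hwd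
      have hwU : w ∈ interior (edom f) := hrsub hwC
      have h1 := hy k w
      rw [hfF _ (hfdom _ (hxS k).1), hfF w (interior_subset hwU), ← EReal.coe_add,
        EReal.coe_le_coe_iff] at h1
      have h2 : ⟪y (k+1), w - z⟫ = r * ‖y (k+1)‖ := by
        rw [hwz, real_inner_smul_right, real_inner_self_eq_norm_sq]
        field_simp
      rw [h2] at h1
      have h3 := hB w hwC
      have h4 := hB z (self_subset_cthickening _ hzC)
      rw [Real.norm_eq_abs] at h3 h4
      have h5 : r * ‖y (k+1)‖ ≤ 2*B := by
        have := abs_le.1 h3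
        have := abs_le.1 h4
        linarith [abs_le.1 h3, abs_le.1 h4]
      rw [le_div_iff₀ hr]
      linarith
  -- bound on the prox centers
  set CK := ‖LinearMap.toContinuousLinearMap Kd‖ with hCKdef
  have hCK : ∀ v, ‖Kd v‖ ≤ CK * ‖v‖ := fun v =>
    (LinearMap.toContinuousLinearMap Kd).le_opNorm v
  have hCK0 : 0 ≤ CK := norm_nonneg _
  set Cc := Ru + δ*(‖gh s0‖ + L*(R + R)) + (θ 0 * δ)*(CK*(2*B/r)) with hCcdef
  have hc_bound : ∀ k, ‖c k‖ ≤ Cc := by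
    intro k
    have hθk0 : θ k ≤ θ 0 := hθanti (Nat.zero_le k)
    have b0 : ‖c k‖ ≤ ‖u k‖ + ‖δ • gh (x k)‖ + ‖(θ k * δ) • Kd (y (k+1))‖ := by
      rw [hc]
      exact le_trans (norm_add_le _ _) (add_le_add_left (norm_sub_le _ _) _)
    have b1 : ‖δ • gh (x k)‖ ≤ δ*(‖gh s0‖ + L*(R + R)) := by
      rw [norm_smul, Real.norm_eq_abs, abs_of_pos hδ]
      exact mul_le_mul_of_nonneg_left (hRg _ (hxS k).1) hδ.le
    have b2 : ‖Kd (y (k+1))‖ ≤ CK * (2*B/r) :=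
      le_trans (hCK _) (mul_le_mul_of_nonneg_left (hRy k) hCK0)
    have b3 : ‖(θ k * δ) • Kd (y (k+1))‖ ≤ (θ 0 * δ)*(CK*(2*B/r)) := by
      rw [norm_smul, Real.norm_eq_abs, abs_of_nonneg (mul_nonneg (hθnn k) hδ.le)]
      refine mul_le_mul (by nlinarith [hθnn k]) b2 (norm_nonneg _) ?_
      exact mul_nonneg (hθnn 0) hδ.le
    rw [hCcdef]
    linarith [hRu k]
  -- the limit of G along the subsequence
  have hhxh : ContinuousAt h xh := ((hOgrad xh (hSO hxhS)).hasFDerivAt).continuousAt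
  set γ := θbar * fh - h xh - (2*δ)⁻¹*‖xh - uh‖^2 with hγdef
  have hGsub : Tendsto (fun j => G (φ j)) atTop (𝓝 γ) := by
    have e : ∀ j, G (φ j) = θ (φ j) * fK (φ j) - h (x (φ j))
        - (2*δ)⁻¹*‖x (φ j) - u (φ j)‖^2 := by
      intro j
      have h1 := hθeq (φ j)
      simp only [hΦdef] at h1
      linarith
    have hquad : Tendsto (fun j => ‖x (φ j) - u (φ j)‖^2) atTop (𝓝 (‖xh - uh‖^2)) :=
      ((htx.sub htu).norm).pow 2
    have := ((hθφ.mul hfKto).sub (hhxh.tendsto.comp htx)).sub (hquad.const_mul ((2*δ)⁻¹))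
    apply Tendsto.congr (fun j => (e j).symm)
    convert this using 2
    rfl
  -- upper semicontinuity-type bound from lower semicontinuity
  have hgup : g xh ≤ ((γ : ℝ) : EReal) := by
    by_contra hcon
    push_neg at hcon
    obtain ⟨cm, hcm1, hcm2⟩ := exists_between hcon
    have hcmtop : cm ≠ ⊤ := ne_top_of_lt hcm2
    have hcmbot : cm ≠ ⊥ := ne_bot_of_gt hcm1
    have hcm : cm = ((cm.toReal : ℝ) : EReal) := (EReal.coe_toReal hcmtop hcmbot).symm
    rw [hcm] at hcm1 hcm2
    have hev := hglsc xh _ hcm2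
    have hev2 : ∀ᶠ j in atTop, cm.toReal ≤ G (φ j) := by
      filter_upwards [htx.eventually hev] with j hj
      rw [hG (φ j)] at hj
      exact (EReal.coe_lt_coe_iff.1 hj).le
    have h6 : cm.toReal ≤ γ := ge_of_tendsto hGsub hev2
    have h7 : γ < cm.toReal := EReal.coe_lt_coe_iff.1 hcm1
    linarith
  have hgtop : g xh ≠ ⊤ := ne_top_of_le_ne_top (EReal.coe_ne_top _) hgup
  have hghat : g xh = (((g xh).toReal : ℝ) : EReal) := (EReal.coe_toReal hgtop (hgbot xh)).symm
  set ghat := (g xh).toReal with hghatdef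
  have hghatle : ghat ≤ γ := by
    rw [hghat] at hgup
    exact EReal.coe_le_coe_iff.1 hgup
  -- lower bound via the strong prox inequality
  have hkey3 : ∀ j, 1 ≤ j → G (φ j) ≤ ghat + (2*δ)⁻¹ * (‖xh - x (φ j)‖ * (2*(R + Cc))) := by
    intro j hj
    have hsp := hSP (φ j - 1) xh hxhS ghat hghat
    rw [hsub1 j hj] at hsp
    have hb1 : ‖xh - c (φ j - 1)‖ ≤ R + Cc :=
      le_trans (norm_sub_le _ _) (add_le_add (hR' xh hxhS) (hc_bound _))
    have hb2 : ‖x (φ j) - c (φ j - 1)‖ ≤ R + Cc :=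
      le_trans (norm_sub_le _ _) (add_le_add (hR' _ (hxS _).1) (hc_bound _))
    have h1 : ‖xh - c (φ j - 1)‖ - ‖x (φ j) - c (φ j - 1)‖ ≤ ‖xh - x (φ j)‖ := by
      have := norm_sub_norm_le (xh - c (φ j - 1)) (x (φ j) - c (φ j - 1))
      simpa [sub_sub_sub_cancel_right] using this
    have hdiff : ‖xh - c (φ j - 1)‖^2 - ‖x (φ j) - c (φ j - 1)‖^2
        ≤ ‖xh - x (φ j)‖ * (2*(R + Cc)) := by
      nlinarith [norm_nonneg (xh - c (φ j - 1)), norm_nonneg (x (φ j) - c (φ j - 1)),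
        norm_nonneg (xh - x (φ j)), hb1, hb2, h1]
    have hq2 : (0:ℝ) ≤ (2*δ)⁻¹*‖xh - x (φ j)‖^2 := by positivity
    nlinarith [hsp, mul_le_mul_of_nonneg_left hdiff hq.le, hq2]
  have hγle : γ ≤ ghat := by
    have hnorm0 : Tendsto (fun j => ‖xh - x (φ j)‖) atTop (𝓝 0) := by
      have := (tendsto_const_nhds (x := xh) (f := atTop)).sub htx
      rw [sub_self] at this
      simpa using this.norm
    have hrhs : Tendsto (fun j => ghat + (2*δ)⁻¹ * (‖xh - x (φ j)‖ * (2*(R + Cc)))) atTop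
        (𝓝 (ghat + (2*δ)⁻¹ * (0 * (2*(R + Cc))))) :=
      tendsto_const_nhds.add (((hnorm0.mul_const _)).const_mul _)
    rw [zero_mul, mul_zero, add_zero] at hrhs
    exact le_of_tendsto_of_tendsto hGsub hrhs (eventually_atTop.2 ⟨1, hkey3⟩)
  have hγeq : ghat = γ := le_antisymm hghatle hγle
  -- final computation
  rw [varpiF, hden]
  have hnum : phiF S g h δ xh uh = ((θbar * fh : ℝ) : EReal) := by
    rw [phiF, hghat]
    simp only [if_pos hxhS, add_zero]
    norm_cast
    rw [hγdef] at hγeq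
    linarith [hγeq]
  rw [hnum, ← EReal.coe_div, EReal.coe_eq_coe_iff]
  exact mul_div_cancel_right₀ θbar (ne_of_gt hfhpos)
end
end
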